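/- Let [X:R] be an inverse monoid presentation of M with factorization FIM(X) →τ T →ψ M (τ idempotent pure, ψ idempotent separating). For each idempotent e of M, the group K_e = {a ∈ T : aψ = e, aa⁻¹ = ẽ} (a component of the kernel of ψ) is a free group, since the maximum group image map σ : T → F(X) restricts to an injective homomorphism on K_e. -/
import Mathlib


/-- An inverse monoid. -/
class InverseMonoid (M : Type*) extends Monoid M, Inv M where
  mul_inv_mul : ∀ a : M, a * a⁻¹ * a = a
  inv_mul_inv : ∀ a : M, a⁻¹ * a * a⁻¹ = a⁻¹
  idem_comm : ∀ e f : M, e * e = e → f * f = f → e * f = f * e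

/-- in the factorization `FIM(X) →τ T →ψ M`, each component `K_e` of the
kernel of the idempotent separating map `ψ` is a free group.  Here `T` is arboreal,
hence `E`-unitary with maximum group image the free group `F(X)` and idempotent pure
quotient map `σ : T → FreeGroup X`; `ẽ` is the unique idempotent of `T` over
`e ∈ E(M)`, and `K_e = {a ∈ T : aψ = e, aa⁻¹ = ẽ}` carries its group structure (from
the Clifford kernel of `ψ`), compatible with the operations of `T`. -/
theorem stmt18 {T M X : Type*} [InverseMonoid T] [InverseMonoid M]
    (ψ : T → M) (hψmul : ∀ a b : T, ψ (a * b) = ψ a * ψ b)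
    (hψsep : ∀ e f : T, e * e = e → f * f = f → ψ e = ψ f → e = f)
    (σ : T → FreeGroup X) (hσmul : ∀ a b : T, σ (a * b) = σ a * σ b)
    (hσpure : ∀ a : T, σ a = 1 → a * a = a)
    (e : M) (he : e * e = e)
    (etil : T) (hetil : etil * etil = etil) (hψetil : ψ etil = e)
    (Ke : Set T) (hKe : Ke = {a : T | ψ a = e ∧ a * a⁻¹ = etil})
    [grp : Group ↥Ke]
    (hmulc : ∀ a b : ↥Ke, ((a * b : ↥Ke) : T) = (a : T) * (b : T))
    (hinvc : ∀ a : ↥Ke, ((a⁻¹ : ↥Ke) : T) = (a : T)⁻¹)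
    (honec : ((1 : ↥Ke) : T) = etil) :
    IsFreeGroup ↥Ke := by
  -- σ etil = 1, since σ etil is idempotent in the free group
  have hσetil : σ etil = 1 := by
    have h := hσmul etil etil
    rw [hetil] at h
    exact mul_left_cancel (a := σ etil) (by rw [← h, mul_one])
  -- the homomorphism φ : Ke →* FreeGroup X
  let φ : ↥Ke →* FreeGroup X :=
    { toFun := fun a => σ (a : T)
      map_one' := by show σ ((1 : ↥Ke) : T) = 1; rw [honec, hσetil]
      map_mul' := fun a b => by show σ (((a * b : ↥Ke)) : T) = _; rw [hmulc, hσmul] }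
  have hinj : Function.Injective φ := by
    rw [injective_iff_map_eq_one]
    intro a ha
    have hidem : (a : T) * (a : T) = (a : T) := hσpure _ ha
    obtain ⟨x, hx⟩ := a
    rw [hKe] at hx
    have h2 : x = etil := hψsep _ _ hidem hetil (by rw [hx.1, hψetil])
    exact Subtype.ext (h2.trans honec.symm)
  exact IsFreeGroup.ofMulEquiv (MonoidHom.ofInjective hinj).symm
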